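/- Let m ≥ 2 be an integer and let a, b be coprime integers with 1 ≤ a < b. Then the digit polynomial D_{a/b}(t) = t^{b+1} + 1 − Σ_{i=1}^{b} c_i·t^{b+1−i} is reciprocal: D_{a/b}(t) = t^{b+1} · D_{a/b}(1/t); equivalently, the reversal of the coefficient sequence of D_{a/b} (Polynomial.reverse) equals D_{a/b} itself. -/

import Mathlib

open Polynomial

/-- The `i`-th digit-polynomial coefficient: `m` if there is an integer `k` with
`a*(i-1) ≤ k*b ≤ a*i`, and `m-2` otherwise. -/
noncomputable def digitCoeff (m : ℤ) (a b : ℕ) (i : ℕ) : ℤ :=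
  open Classical in
  if ∃ k : ℤ, (a : ℤ) * ((i : ℤ) - 1) ≤ k * b ∧ k * b ≤ (a : ℤ) * i then m else m - 2

/-- The digit polynomial `D_{a/b}(t) = t^(b+1) + 1 - ∑_{i=1}^{b} c_i t^(b+1-i)`. -/
noncomputable def digitPoly (m : ℤ) (a b : ℕ) : Polynomial ℤ :=
  X ^ (b + 1) + 1 - ∑ i ∈ Finset.Icc 1 b, C (digitCoeff m a b i) * X ^ (b + 1 - i)

lemma digitCoeff_symm (m : ℤ) (a b i : ℕ) (h2 : i ≤ b) :
    digitCoeff m a b (b + 1 - i) = digitCoeff m a b i := by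
  unfold digitCoeff
  have hcast : ((b + 1 - i : ℕ) : ℤ) = (b : ℤ) + 1 - i := by
    have : i ≤ b + 1 := by omega
    push_cast [Nat.cast_sub this]; ring
  rw [hcast]
  congr 1
  apply propext
  constructor
  · rintro ⟨k, hk1, hk2⟩
    refine ⟨a - k, ?_, ?_⟩ <;> nlinarith
  · rintro ⟨k, hk1, hk2⟩
    refine ⟨a - k, ?_, ?_⟩ <;> nlinarith

lemma reflect_finset_sum (N : ℕ) (s : Finset ℕ) (f : ℕ → Polynomial ℤ) :
    reflect N (∑ i ∈ s, f i) = ∑ i ∈ s, reflect N (f i) := by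
  classical
  induction s using Finset.induction with
  | empty => simp
  | insert _ _ h ih => rw [Finset.sum_insert h, Finset.sum_insert h, reflect_add, ih]

lemma reflect_neg' (N : ℕ) (p : Polynomial ℤ) : reflect N (-p) = -reflect N p := by
  have : -p = C (-1) * p := by rw [map_neg, map_one]; ring
  rw [this, reflect_C_mul, map_neg, map_one]; ring

/-- The digit polynomial is reciprocal: its coefficient sequence is palindromic,
i.e. `Polynomial.reverse` fixes it. -/
theorem digitPoly_reciprocal (m : ℤ) (hm : 2 ≤ m) (a b : ℕ) (ha : 1 ≤ a) (hab : a < b)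
    (hcop : Nat.Coprime a b) :
    (digitPoly m a b).reverse = digitPoly m a b := by
  classical
  set S : Polynomial ℤ := ∑ i ∈ Finset.Icc 1 b, C (digitCoeff m a b i) * X ^ (b + 1 - i)
    with hSdef
  have hq : (1 - S : Polynomial ℤ).natDegree ≤ b := by
    refine le_trans (natDegree_sub_le _ _) ?_
    rw [natDegree_one]
    refine max_le (Nat.zero_le _) ?_
    refine le_trans (natDegree_sum_le _ _) ?_
    refine Finset.sup_le ?_
    intro i hi
    simp only [Function.comp_apply]
    refine le_trans (natDegree_C_mul_le _ _) ?_
    rw [natDegree_X_pow]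
    have := (Finset.mem_Icc.mp hi).1
    omega
  have hsplit : digitPoly m a b = X ^ (b + 1) + (1 - S) := by
    rw [digitPoly, ← hSdef]; ring
  have hd : (digitPoly m a b).natDegree = b + 1 := by
    rw [hsplit]
    rw [natDegree_add_eq_left_of_natDegree_lt]
    · exact natDegree_X_pow _
    · rw [natDegree_X_pow]; omega
  rw [reverse, hd, hsplit, reflect_add, sub_eq_add_neg, reflect_add, reflect_neg',
    reflect_finset_sum]
  have h1 : reflect (b + 1) (X ^ (b + 1) : Polynomial ℤ) = 1 := by
    rw [← mul_one (X ^ (b + 1) : Polynomial ℤ), ← C_1, mul_comm, reflect_C_mul_X_pow,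
      revAt_le (le_refl _), Nat.sub_self, pow_zero, map_one, mul_one]
  have h2 : reflect (b + 1) (1 : Polynomial ℤ) = X ^ (b + 1) := by
    rw [← C_1, ← mul_one (C 1 : Polynomial ℤ), ← pow_zero (X : Polynomial ℤ),
      reflect_C_mul_X_pow, revAt_le (Nat.zero_le _), Nat.sub_zero, map_one, one_mul]
  have h3 : ∀ i ∈ Finset.Icc 1 b,
      reflect (b + 1) (C (digitCoeff m a b i) * X ^ (b + 1 - i))
        = C (digitCoeff m a b i) * X ^ i := by
    intro i hi
    obtain ⟨hi1, hi2⟩ := Finset.mem_Icc.mp hi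
    rw [reflect_C_mul_X_pow, revAt_le (by omega : b + 1 - i ≤ b + 1)]
    congr 2
    omega
  rw [h1, h2, Finset.sum_congr rfl h3]
  have hsum : ∑ i ∈ Finset.Icc 1 b, C (digitCoeff m a b i) * X ^ i = S := by
    rw [hSdef]
    refine Finset.sum_nbij' (fun i => b + 1 - i) (fun i => b + 1 - i) ?_ ?_ ?_ ?_ ?_ <;>
      intro i hi <;> simp only [Finset.mem_Icc] at hi ⊢
    · omega
    · omega
    · omega
    · omega
    · rw [digitCoeff_symm m a b i hi.2]
      congr 2
      omega
  rw [hsum]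
  ring
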